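/- Let R be a *-ring and let a ∈ R be both group invertible and Moore–Penrose invertible. Then a is an SEP element if and only if (a(a#)*a⁺)² = (a⁺a²)² and (a(a#)*a⁺)³ = (a⁺a²)³. -/
import Mathlib

set_option maxHeartbeats 4000000 in
theorem stmt_12 (R : Type*) [Ring R] [StarRing R] (a ap ag : R)
    (h1 : a * ap * a = a) (h2 : ap * a * ap = ap)
    (h3 : star (a * ap) = a * ap) (h4 : star (ap * a) = ap * a)
    (g1 : a * ag * a = a) (g2 : ag * a * ag = ag) (g3 : a * ag = ag * a) :
    (star a = ap ∧ ap = ag) ↔ ((a * star ag * ap) * (a * star ag * ap) = (ap * a * a) * (ap * a * a) ∧ (a * star ag * ap) * (a * star ag * ap) * (a * star ag * ap) = (ap * a * a) * (ap * a * a) * (ap * a * a)) := by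
  constructor
  · rintro ⟨e1, e2⟩
    have hg : star ag = a := by rw [← e2, ← e1, star_star]
    have c : a * ap = ap * a := by rw [e2, g3]
    have key : a * star ag * ap = ap * a * a := by
      rw [hg, mul_assoc, c, ← mul_assoc, c]
    rw [key]
    exact ⟨rfl, rfl⟩
  · rintro ⟨hA, hB⟩
    have EG0 : a*ap*a - a = 0 := sub_eq_zero.mpr h1
    have EG1 : ap*a*ap - ap = 0 := sub_eq_zero.mpr h2
    have EG2 : (star ap)*(star a) - a*ap = 0 := by
      rw [sub_eq_zero, ← star_mul]; exact h3
    have EG3 : (star a)*(star ap) - ap*a = 0 := by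
      rw [sub_eq_zero, ← star_mul]; exact h4
    have EG4 : a*ag*a - a = 0 := sub_eq_zero.mpr g1
    have EG5 : ag*a*ag - ag = 0 := sub_eq_zero.mpr g2
    have EG6 : ag*a - a*ag = 0 := sub_eq_zero.mpr g3.symm
    have EG7 : (star a)*(star ap)*(star a) - (star a) = 0 := by
      rw [sub_eq_zero]
      simpa only [star_mul, mul_assoc] using congrArg star h1
    have EG8 : (star ap)*(star a)*(star ap) - (star ap) = 0 := by
      rw [sub_eq_zero]
      simpa only [star_mul, mul_assoc] using congrArg star h2
    have EG9 : (star a)*(star ag)*(star a) - (star a) = 0 := by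
      rw [sub_eq_zero]
      simpa only [star_mul, mul_assoc] using congrArg star g1
    have EG10 : (star ag)*(star a)*(star ag) - (star ag) = 0 := by
      rw [sub_eq_zero]
      simpa only [star_mul, mul_assoc] using congrArg star g2
    have EG11 : (star ag)*(star a) - (star a)*(star ag) = 0 := by
      rw [sub_eq_zero]
      simpa only [star_mul] using congrArg star g3
    have EG12 : a*(star ag)*ap*a*(star ag)*ap - ap*a*a*ap*a*a = 0 := by
      rw [sub_eq_zero]
      simpa only [mul_assoc] using hA
    have EG13 : a*(star ag)*ap*a*(star ag)*ap*a*(star ag)*ap - ap*a*a*ap*a*a*ap*a*a = 0 := by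
      rw [sub_eq_zero]
      simpa only [mul_assoc] using hB
    have E0 : a*ap*a - a = 0 := EG0
    have E1 : ap*a*ap - ap = 0 := EG1
    have E2 : (star ap)*(star a) - a*ap = 0 := EG2
    have E3 : (star a)*(star ap) - ap*a = 0 := EG3
    have E4 : a*ag*a - a = 0 := EG4
    have E5 : ag*a*ag - ag = 0 := EG5
    have E6 : ag*a - a*ag = 0 := EG6
    have E7 : (star a)*a*ap - (star a) = 0 := by
      have h : (star a)*a*ap - (star a) = ((star a)*(star ap)*(star a) - (star a)) - (star a)*((star ap)*(star a) - a*ap) := by noncomm_ring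
      rw [EG7, E2] at h
      simpa using h
    have E8 : a*ap*(star ap) - (star ap) = 0 := by
      have h : a*ap*(star ap) - (star ap) = ((star ap)*(star a)*(star ap) - (star ap)) - ((star ap)*(star a) - a*ap)*(star ap) := by noncomm_ring
      rw [EG8, E2] at h
      simpa using h
    have E9 : (star a)*(star ag)*(star a) - (star a) = 0 := EG9
    have E10 : (star ag)*(star a)*(star ag) - (star ag) = 0 := EG10
    have E11 : (star ag)*(star a) - (star a)*(star ag) = 0 := EG11
    have E12 : a*(star ag)*ap*a*(star ag)*ap - ap*a*a*a = 0 := by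
      have h : a*(star ag)*ap*a*(star ag)*ap - ap*a*a*a = (a*(star ag)*ap*a*(star ag)*ap - ap*a*a*ap*a*a) + ap*a*(a*ap*a - a)*a := by noncomm_ring
      rw [EG12, E0] at h
      simpa using h
    have E13 : ap*a*a*a*a*(star ag)*ap - ap*a*a*a*a = 0 := by
      have h : ap*a*a*a*a*(star ag)*ap - ap*a*a*a*a = (a*(star ag)*ap*a*(star ag)*ap*a*(star ag)*ap - ap*a*a*ap*a*a*ap*a*a) + ap*a*(a*ap*a - a)*a*ap*a*a + ap*a*a*(a*ap*a - a)*a - (a*(star ag)*ap*a*(star ag)*ap - ap*a*a*a)*a*(star ag)*ap := by noncomm_ring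
      rw [EG13, E0, E12] at h
      simpa using h
    have E14 : ap*a*(star a) - (star a) = 0 := by
      have h : ap*a*(star a) - (star a) = (star a)*((star ap)*(star a) - a*ap) - ((star a)*(star ap) - ap*a)*(star a) + ((star a)*a*ap - (star a)) := by noncomm_ring
      rw [E2, E3, E7] at h
      simpa using h
    have E15 : (star ap)*ap*a - (star ap) = 0 := by
      have h : (star ap)*ap*a - (star ap) = ((star ap)*(star a) - a*ap)*(star ap) - (star ap)*((star a)*(star ap) - ap*a) + (a*ap*(star ap) - (star ap)) := by noncomm_ring
      rw [E2, E3, E8] at h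
      simpa using h
    have E16 : a*a*ag - a = 0 := by
      have h : a*a*ag - a = (a*ag*a - a) - a*(ag*a - a*ag) := by noncomm_ring
      rw [E4, E6] at h
      simpa using h
    have E17 : a*ag*ag - ag = 0 := by
      have h : a*ag*ag - ag = (ag*a*ag - ag) - (ag*a - a*ag)*ag := by noncomm_ring
      rw [E5, E6] at h
      simpa using h
    have E18 : (star ag)*ap*a - (star a)*(star ag)*(star ap) = 0 := by
      have h : (star ag)*ap*a - (star a)*(star ag)*(star ap) = ((star ag)*(star a) - (star a)*(star ag))*(star ap) - (star ag)*((star a)*(star ap) - ap*a) := by noncomm_ring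
      rw [E11, E3] at h
      simpa using h
    have E19 : (star a)*(star a)*(star ag) - (star a) = 0 := by
      have h : (star a)*(star a)*(star ag) - (star a) = - (star a)*((star ag)*(star a) - (star a)*(star ag)) + ((star a)*(star ag)*(star a) - (star a)) := by noncomm_ring
      rw [E11, E9] at h
      simpa using h
    have E20 : (star a)*(star ag)*(star ag) - (star ag) = 0 := by
      have h : (star a)*(star ag)*(star ag) - (star ag) = ((star ag)*(star a)*(star ag) - (star ag)) - ((star ag)*(star a) - (star a)*(star ag))*(star ag) := by noncomm_ring
      rw [E10, E11] at h
      simpa using h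
    have E21 : a*ag*ap*a - a*ag = 0 := by
      have h : a*ag*ap*a - a*ag = ag*(a*ap*a - a) + (ag*a - a*ag) - (ag*a - a*ag)*ap*a := by noncomm_ring
      rw [E0, E6] at h
      simpa using h
    have E22 : (star a)*(star ag)*a*ap - (star a)*(star ag) = 0 := by
      have h : (star a)*(star ag)*a*ap - (star a)*(star ag) = ((star ag)*(star a) - (star a)*(star ag)) - ((star ag)*(star a) - (star a)*(star ag))*a*ap + (star ag)*((star a)*a*ap - (star a)) := by noncomm_ring
      rw [E11, E7] at h
      simpa using h
    have E23 : (star a)*(star ag)*(star ap)*ap - (star ag)*ap = 0 := by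
      have h : (star a)*(star ag)*(star ap)*ap - (star ag)*ap = (star ag)*(ap*a*ap - ap) - ((star ag)*ap*a - (star a)*(star ag)*(star ap))*ap := by noncomm_ring
      rw [E1, E18] at h
      simpa using h
    have E24 : a*ag*(star ap) - (star ap) = 0 := by
      have h : a*ag*(star ap) - (star ap) = (a*ag*a - a)*ap*(star ap) + (a*ap*(star ap) - (star ap)) - a*ag*(a*ap*(star ap) - (star ap)) := by noncomm_ring
      rw [E4, E8] at h
      simpa using h
    have E25 : (star ap)*a*ag - (star ap) = 0 := by
      have h : (star ap)*a*ag - (star ap) = ((star ap)*ap*a - (star ap)) - ((star ap)*ap*a - (star ap))*ag*a + (star ap)*ap*(a*ag*a - a) - (star ap)*(ag*a - a*ag) := by noncomm_ring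
      rw [E15, E4, E6] at h
      simpa using h
    have E26 : (star ap)*ag*ag - (star ap)*ap*ag = 0 := by
      have h : (star ap)*ag*ag - (star ap)*ap*ag = - ((star ap)*ap*a - (star ap))*ag*ag + (star ap)*ap*(a*ag*ag - ag) := by noncomm_ring
      rw [E15, E17] at h
      simpa using h
    have E27 : ap*a*(star ag) - (star ag) = 0 := by
      have h : ap*a*(star ag) - (star ag) = (ap*a*(star a) - (star a))*(star ag)*(star ag) + ((star a)*(star ag)*(star ag) - (star ag)) - ap*a*((star a)*(star ag)*(star ag) - (star ag)) := by noncomm_ring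
      rw [E14, E20] at h
      simpa using h
    have E28 : (star a)*(star ag)*(star ap)*(star ag) - (star ag)*(star ag) = 0 := by
      have h : (star a)*(star ag)*(star ap)*(star ag) - (star ag)*(star ag) = - ((star ag)*ap*a - (star a)*(star ag)*(star ap))*(star ag) + (star ag)*(ap*a*(star ag) - (star ag)) := by noncomm_ring
      rw [E18, E27] at h
      simpa using h
    have E29 : ag*ap*a - ag = 0 := by
      have h : ag*ap*a - ag = ag*(a*ag*ap*a - a*ag) + (ag*a*ag - ag) - (ag*a*ag - ag)*ap*a := by noncomm_ring
      rw [E21, E5] at h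
      simpa using h
    have E30 : (star ag)*a*ap - (star ag) = 0 := by
      have h : (star ag)*a*ap - (star ag) = ((star ag)*(star a)*(star ag) - (star ag)) - ((star ag)*(star a)*(star ag) - (star ag))*a*ap + (star ag)*((star a)*(star ag)*a*ap - (star a)*(star ag)) := by noncomm_ring
      rw [E10, E22] at h
      simpa using h
    have E31 : a*ap*(star ag)*(star ap)*ap - (star ap)*(star ag)*ap = 0 := by
      have h : a*ap*(star ag)*(star ap)*ap - (star ap)*(star ag)*ap = - ((star ap)*(star a) - a*ap)*(star ag)*(star ap)*ap + (star ap)*((star a)*(star ag)*(star ap)*ap - (star ag)*ap) := by noncomm_ring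
      rw [E2, E23] at h
      simpa using h
    have E32 : (star ag)*(star ag)*ap - (star ag)*(star ap)*ap = 0 := by
      have h : (star ag)*(star ag)*ap - (star ag)*(star ap)*ap = ((star ag)*(star a)*(star ag) - (star ag))*(star ap)*ap - (star ag)*((star a)*(star ag)*(star ap)*ap - (star ag)*ap) := by noncomm_ring
      rw [E10, E23] at h
      simpa using h
    have E33 : ap*a*a*a - a*(star ag)*(star ap)*ap = 0 := by
      have h : ap*a*a*a - a*(star ag)*(star ap)*ap = - (a*(star ag)*ap*a*(star ag)*ap - ap*a*a*a) + a*((star ag)*ap*a - (star a)*(star ag)*(star ap))*(star ag)*ap + a*((star a)*(star ag)*(star ap)*(star ag) - (star ag)*(star ag))*ap + a*((star ag)*(star ag)*ap - (star ag)*(star ap)*ap) := by noncomm_ring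
      rw [E12, E18, E28, E32] at h
      simpa using h
    have E34 : a*ag*(star ag)*(star ap)*ap - a = 0 := by
      have h : a*ag*(star ag)*(star ap)*ap - a = (ag*ap*a - ag)*a*a + (a*ag*a - a) - ag*(ap*a*a*a - a*(star ag)*(star ap)*ap) + (ag*a - a*ag)*a - (ag*a - a*ag)*(star ag)*(star ap)*ap := by noncomm_ring
      rw [E29, E4, E33, E6] at h
      simpa using h
    have E35 : a*(star ag)*(star ap)*ag - a*(star ag)*(star ap)*ap = 0 := by
      have h : a*(star ag)*(star ap)*ag - a*(star ag)*(star ap)*ap = - a*(star ag)*((star ap)*ap*a - (star ap))*ag + ap*a*a*(a*ag*a - a) + (ap*a*a*a - a*(star ag)*(star ap)*ap) - (ap*a*a*a - a*(star ag)*(star ap)*ap)*ag*a - a*(star ag)*(star ap)*ap*(ag*a - a*ag) := by noncomm_ring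
      rw [E15, E4, E33, E6] at h
      simpa using h
    have E36 : (star ag)*(star ap)*ag - (star ag)*(star ap)*ap = 0 := by
      have h : (star ag)*(star ap)*ag - (star ag)*(star ap)*ap = (ap*a*(star ag) - (star ag))*(star ap)*ap - (ap*a*(star ag) - (star ag))*(star ap)*ag + ap*(a*(star ag)*(star ap)*ag - a*(star ag)*(star ap)*ap) := by noncomm_ring
      rw [E27, E35] at h
      simpa using h
    have E37 : ap*a*ag - ap = 0 := by
      have h : ap*a*ag - ap = (ap*a*ap - ap) + ((star a)*(star a)*(star ag) - (star a))*(star ap)*ap - ((star a)*(star a)*(star ag) - (star a))*(star ap)*ag + ((star a)*(star ap) - ap*a)*ap - ((star a)*(star ap) - ap*a)*ag + (star a)*(star a)*((star ag)*(star ap)*ag - (star ag)*(star ap)*ap) := by noncomm_ring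
      rw [E1, E19, E3, E36] at h
      simpa using h
    have E38 : a*ag - a*ap = 0 := by
      have h : a*ag - a*ap = - (a*ap*a - a)*ag + a*(ap*a*ag - ap) := by noncomm_ring
      rw [E0, E37] at h
      simpa using h
    have E39 : a*ap*ap - ag = 0 := by
      have h : a*ap*ap - ag = (ag*a*ag - ag) - (ag*a - a*ag)*ap - (a*ag - a*ap)*ap - ag*(a*ag - a*ap) := by noncomm_ring
      rw [E5, E6, E38] at h
      simpa using h
    have E40 : a*a*ap - a = 0 := by
      have h : a*a*ap - a = (a*a*ag - a) - a*(a*ag - a*ap) := by noncomm_ring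
      rw [E16, E38] at h
      simpa using h
    have E41 : (star ap)*a*ap - (star ap) = 0 := by
      have h : (star ap)*a*ap - (star ap) = ((star ap)*a*ag - (star ap)) - (star ap)*(a*ag - a*ap) := by noncomm_ring
      rw [E25, E38] at h
      simpa using h
    have E42 : (star ap)*ag - (star ap)*ap = 0 := by
      have h : (star ap)*ag - (star ap)*ap = - ((star ap)*ap*a - (star ap))*ag + (star ap)*(ap*a*ag - ap) := by noncomm_ring
      rw [E15, E37] at h
      simpa using h
    have E43 : ag*ag - ag*ap = 0 := by
      have h : ag*ag - ag*ap = - (ag*ap*a - ag)*ag + ag*(ap*a*ag - ap) := by noncomm_ring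
      rw [E29, E37] at h
      simpa using h
    have E44 : (star ap)*ap*ag - (star ap)*ap*ap = 0 := by
      have h : (star ap)*ap*ag - (star ap)*ap*ap = - ((star ap)*ag*ag - (star ap)*ap*ag) + ((star ap)*ag - (star ap)*ap)*ap + (star ap)*(ag*ag - ag*ap) := by noncomm_ring
      rw [E26, E42, E43] at h
      simpa using h
    have E45 : (star a)*ag - (star a)*ap = 0 := by
      have h : (star a)*ag - (star a)*ap = ((star a)*a*ap - (star a))*ap - (star a)*(a*ap*ap - ag) := by noncomm_ring
      rw [E7, E39] at h
      simpa using h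
    have E46 : (star a)*ap*a - (star a) = 0 := by
      have h : (star a)*ap*a - (star a) = (star a)*(ag*a - a*ag) + ((star a)*a*ap - (star a)) + (star a)*(a*ag - a*ap) - ((star a)*ag - (star a)*ap)*a := by noncomm_ring
      rw [E6, E7, E38, E45] at h
      simpa using h
    have E47 : (star ag)*ag - (star ag)*ap = 0 := by
      have h : (star ag)*ag - (star ag)*ap = ((star ag)*a*ap - (star ag))*ap - (star ag)*(a*ap*ap - ag) := by noncomm_ring
      rw [E30, E39] at h
      simpa using h
    have E48 : (star a)*(star ag)*(star ap) - (star ag) = 0 := by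
      have h : (star a)*(star ag)*(star ap) - (star ag) = - ((star ag)*ap*a - (star a)*(star ag)*(star ap)) + ((star ag)*a*ap - (star ag)) + (star ag)*(ag*a - a*ag) + (star ag)*(a*ag - a*ap) - ((star ag)*ag - (star ag)*ap)*a := by noncomm_ring
      rw [E18, E30, E6, E38, E47] at h
      simpa using h
    have E49 : (star a)*(star ag) - ap*a = 0 := by
      have h : (star a)*(star ag) - ap*a = - ((star ag)*(star a) - (star a)*(star ag)) + ((star ag)*(star a) - (star a)*(star ag))*ap*a + (star a)*((star ag)*ap*a - (star a)*(star ag)*(star ap)) + ((star a)*(star a)*(star ag) - (star a))*(star ap) + ((star a)*(star ap) - ap*a) - (star ag)*((star a)*ap*a - (star a)) := by noncomm_ring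
      rw [E11, E18, E19, E3, E46] at h
      simpa using h
    have E50 : a*ap*(star ag) - (star ap) = 0 := by
      have h : a*ap*(star ag) - (star ap) = ((star ap)*ap*a - (star ap)) - ((star ap)*(star a) - a*ap)*(star ag) + (star ap)*((star a)*(star ag) - ap*a) := by noncomm_ring
      rw [E15, E2, E49] at h
      simpa using h
    have E51 : ap*a*(star ap) - (star ag) = 0 := by
      have h : ap*a*(star ap) - (star ag) = ((star a)*(star ag)*(star ap) - (star ag)) - ((star a)*(star ag) - ap*a)*(star ap) := by noncomm_ring
      rw [E48, E49] at h
      simpa using h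
    have E52 : (star ap)*(star ag) - (star ap)*(star ap) = 0 := by
      have h : (star ap)*(star ag) - (star ap)*(star ap) = ((star ap)*(star a) - a*ap)*(star ag)*(star ap) - (star ap)*((star a)*(star ag)*(star ap) - (star ag)) + (a*ap*(star ag) - (star ap))*(star ap) := by noncomm_ring
      rw [E2, E48, E50] at h
      simpa using h
    have E53 : (star ag)*(star ag) - (star ag)*(star ap) = 0 := by
      have h : (star ag)*(star ag) - (star ag)*(star ap) = ((star ag)*(star a)*(star ag) - (star ag))*(star ap) - (star ag)*((star a)*(star ag)*(star ap) - (star ag)) := by noncomm_ring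
      rw [E10, E48] at h
      simpa using h
    have E54 : a*(star ag) - a*(star ap) = 0 := by
      have h : a*(star ag) - a*(star ap) = - (a*a*ap - a)*(star ag) + a*(a*ap*(star ag) - (star ap)) := by noncomm_ring
      rw [E40, E50] at h
      simpa using h
    have E55 : (star ap)*(star ap)*ap - a = 0 := by
      have h : (star ap)*(star ap)*ap - a = - (a*ap*(star ag)*(star ap)*ap - (star ap)*(star ag)*ap) + (a*ag*(star ag)*(star ap)*ap - a) - (a*ag - a*ap)*(star ag)*(star ap)*ap - ((star ap)*(star ag) - (star ap)*(star ap))*ap := by noncomm_ring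
      rw [E31, E34, E38, E52] at h
      simpa using h
    have E56 : (star ag)*ap - (star a)*a = 0 := by
      have h : (star ag)*ap - (star a)*a = - ((star a)*(star ap) - ap*a)*(star ap)*ap - (ap*a*(star ap) - (star ag))*ap + (star a)*((star ap)*(star ap)*ap - a) := by noncomm_ring
      rw [E3, E51, E55] at h
      simpa using h
    have E57 : (star a)*a*a - (star ag) = 0 := by
      have h : (star a)*a*a - (star ag) = - ((star ag)*ap - (star a)*a)*a + ((star ag)*ap*a - (star a)*(star ag)*(star ap)) + ((star a)*(star ag)*(star ap) - (star ag)) := by noncomm_ring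
      rw [E56, E18, E48] at h
      simpa using h
    have E58 : (star ap)*(star ap) - a*a = 0 := by
      have h : (star ap)*(star ap) - a*a = - (star ap)*((star ap)*ap*a - (star ap)) + ((star ap)*(star ap)*ap - a)*a := by noncomm_ring
      rw [E15, E55] at h
      simpa using h
    have E59 : a*a*(star a) - (star ap) = 0 := by
      have h : a*a*(star a) - (star ap) = - ((star ap)*(star ap) - a*a)*(star a) + (star ap)*((star ap)*(star a) - a*ap) + ((star ap)*a*ap - (star ap)) := by noncomm_ring
      rw [E58, E2, E41] at h
      simpa using h
    have E60 : (star ag)*(star ap) - a*a = 0 := by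
      have h : (star ag)*(star ap) - a*a = - (star ag)*((star a)*a*a - (star ag)) + ((star ag)*(star a) - (star a)*(star ag))*a*a + (ap*a*a*a - a*(star ag)*(star ap)*ap) + ((star a)*(star ag) - ap*a)*a*a - ((star ag)*(star ag) - (star ag)*(star ap)) + (a*(star ag) - a*(star ap))*(star ap)*ap + a*((star ap)*(star ap)*ap - a) := by noncomm_ring
      rw [E57, E11, E33, E49, E53, E54, E55] at h
      simpa using h
    have E61 : (star ag) - (star ap) = 0 := by
      have h : (star ag) - (star ap) = (a*a*(star a) - (star ap)) + ((star ag)*(star ap) - a*a)*(star a) - (star ag)*((star ap)*(star a) - a*ap) - ((star ag)*a*ap - (star ag)) := by noncomm_ring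
      rw [E59, E60, E2, E30] at h
      simpa using h
    have E62 : ap*a - a*ap = 0 := by
      have h : ap*a - a*ap = - ((star ag)*(star a) - (star a)*(star ag)) + ((star ag) - (star ap))*(star a) + ((star ap)*(star a) - a*ap) - ((star a)*(star ag) - ap*a) := by noncomm_ring
      rw [E11, E61, E2, E49] at h
      simpa using h
    have E63 : (star ap)*ap - (star a)*a = 0 := by
      have h : (star ap)*ap - (star a)*a = ((star ag)*ap - (star a)*a) - ((star ag) - (star ap))*ag - ((star ap)*ag - (star ap)*ap) + ((star ag)*ag - (star ag)*ap) := by noncomm_ring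
      rw [E56, E61, E42, E47] at h
      simpa using h
    have E64 : ag - ap = 0 := by
      have h : ag - ap = (ap*a*ap - ap) - (ap*a - a*ap)*ap - (a*ap*ap - ag) := by noncomm_ring
      rw [E1, E62, E39] at h
      simpa using h
    have E65 : a*(star ap)*a - a*a*a = 0 := by
      have h : a*(star ap)*a - a*a*a = a*((star ap)*(star ap) - a*a) + (ap*a*a*a*a*(star ag)*ap - ap*a*a*a*a) + a*(star ag)*((star ap)*ap*a - (star ap)) - a*(star ag)*((star ap)*ap*a - (star ap))*(star ag)*ap - (ap*a*a*a - a*(star ag)*(star ap)*ap)*a*(star ag)*ap + (ap*a*a*a - a*(star ag)*(star ap)*ap)*a - a*(star ag)*((star ap)*(star ag) - (star ap)*(star ap))*ap - (a*(star ag) - a*(star ap))*(star ap)*(star ap)*ap + (a*(star ag) - a*(star ap))*(star ap) - a*(star ap)*((star ap)*(star ap)*ap - a) := by noncomm_ring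
      rw [E58, E13, E15, E33, E52, E54, E55] at h
      simpa using h
    have E66 : (star ap)*a - a*a = 0 := by
      have h : (star ap)*a - a*a = ag*(a*(star ap)*a - a*a*a) - (a*ag*(star ap) - (star ap))*a + (a*ag*a - a)*a + (ag*a - a*ag)*a*a - (ag*a - a*ag)*(star ap)*a := by noncomm_ring
      rw [E65, E24, E4, E6] at h
      simpa using h
    have E67 : (star ap) - a = 0 := by
      have h : (star ap) - a = (a*ap*a - a) - ((star a)*a*a - (star ag)) - ((star ag) - (star ap)) + (ap*a - a*ap)*a - (star a)*((star ap)*a - a*a) + ((star a)*(star ap) - ap*a)*a := by noncomm_ring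
      rw [E0, E57, E61, E62, E66, E3] at h
      simpa using h
    have E68 : (star a) - ap = 0 := by
      have h : (star a) - ap = - ((star ap)*ap - (star a)*a)*ap + (ag - ap) + ((star ap) - a)*ag*ag + (a*ag*ag - ag) - ((star ap)*ag*ag - (star ap)*ap*ag) - ((star a)*a*ap - (star a)) - ((star ap)*ap*ag - (star ap)*ap*ap) := by noncomm_ring
      rw [E63, E64, E67, E17, E26, E7, E44] at h
      simpa using h
    exact ⟨sub_eq_zero.mp E68, (sub_eq_zero.mp E64).symm⟩
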